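/- Let x > 0 and n be real numbers with 0 < n < x − ((3√2)/4)^{2/3}·x^{1/3}. Then η(x,n) := √(x² − n²) − n·arccos(n/x) satisfies η(x,n) > 1. -/

import Mathlib

open Real

/-- The phase function `η(k,ν) = √(k²-ν²) - ν·arccos(ν/k)`. -/
noncomputable def eta (k ν : ℝ) : ℝ :=
  Real.sqrt (k ^ 2 - ν ^ 2) - ν * Real.arccos (ν / k)

lemma arccos_ge_sqrt {t : ℝ} (h0 : -1 ≤ t) (h1 : t ≤ 1) :
    Real.sqrt 2 * Real.sqrt (1 - t) ≤ Real.arccos t := by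
  set s := Real.sqrt ((1 - t) / 2) with hs
  have hs0 : 0 ≤ s := Real.sqrt_nonneg _
  have hs1 : s ≤ 1 := Real.sqrt_le_one.2 (by linarith)
  have hssq : s ^ 2 = (1 - t) / 2 := Real.sq_sqrt (by linarith)
  have hsin : Real.sin (Real.arcsin s) = s := Real.sin_arcsin (by linarith) hs1
  have harcsin : s ≤ Real.arcsin s := by
    nth_rewrite 1 [← hsin]
    exact Real.sin_le (Real.arcsin_nonneg.2 hs0)
  have hpyth := Real.sin_sq_add_cos_sq (Real.arcsin s)
  have hcos : Real.cos (2 * Real.arcsin s) = t := by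
    rw [Real.cos_two_mul]
    rw [hsin] at hpyth
    nlinarith
  have harcnn : 0 ≤ Real.arcsin s := Real.arcsin_nonneg.2 hs0
  have harange : Real.arccos t = 2 * Real.arcsin s := by
    rw [← hcos, Real.arccos_cos (by linarith)]
    have := Real.arcsin_le_pi_div_two s
    linarith
  have h4 : (2:ℝ) = Real.sqrt 4 := by
    rw [show (4:ℝ) = 2^2 by norm_num, Real.sqrt_sq (by norm_num)]
  have hsqrt : Real.sqrt 2 * Real.sqrt (1 - t) = 2 * s := by
    rw [← Real.sqrt_mul (by norm_num : (0:ℝ) ≤ 2), hs]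
    nth_rewrite 2 [h4]
    rw [← Real.sqrt_mul (by norm_num : (0:ℝ) ≤ 4)]
    ring_nf
  rw [harange, hsqrt]
  linarith

lemma key_ineq {t : ℝ} (h0 : 0 ≤ t) (h1 : t ≤ 1) :
    2 * Real.sqrt 2 / 3 * ((1 - t) * Real.sqrt (1 - t)) ≤
      Real.sqrt (1 - t ^ 2) - t * Real.arccos t := by
  set g : ℝ → ℝ := fun t =>
    Real.sqrt (1 - t ^ 2) - t * Real.arccos t
      - 2 * Real.sqrt 2 / 3 * ((1 - t) * Real.sqrt (1 - t)) with hg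
  have hD : ∀ y ∈ Set.Ioo (0:ℝ) 1,
      HasDerivAt g (Real.sqrt 2 * Real.sqrt (1 - y) - Real.arccos y) y := by
    rintro y ⟨hy0, hy1⟩
    have hy2 : 0 < 1 - y ^ 2 := by nlinarith
    have hy3 : 0 < 1 - y := by linarith
    have hs2 : Real.sqrt (1 - y ^ 2) ≠ 0 := ne_of_gt (Real.sqrt_pos.2 hy2)
    have hs3 : Real.sqrt (1 - y) ≠ 0 := ne_of_gt (Real.sqrt_pos.2 hy3)
    have hinner : HasDerivAt (fun t : ℝ => 1 - t ^ 2) (-(2 * y)) y := by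
      simpa using (hasDerivAt_pow 2 y).const_sub 1
    have hsq1 : HasDerivAt (fun t : ℝ => Real.sqrt (1 - t ^ 2))
        (1 / (2 * Real.sqrt (1 - y ^ 2)) * -(2 * y)) y :=
      (Real.hasDerivAt_sqrt (ne_of_gt hy2)).comp y hinner
    have harc : HasDerivAt Real.arccos (-(1 / Real.sqrt (1 - y ^ 2))) y :=
      Real.hasDerivAt_arccos (by linarith) (by linarith)
    have hmul : HasDerivAt (fun t : ℝ => t * Real.arccos t)
        (1 * Real.arccos y + y * -(1 / Real.sqrt (1 - y ^ 2))) y :=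
      (hasDerivAt_id y).mul harc
    have hu : HasDerivAt (fun t : ℝ => 1 - t) (-1) y := by
      simpa using (hasDerivAt_id y).const_sub 1
    have hsqu : HasDerivAt (fun t : ℝ => Real.sqrt (1 - t))
        (1 / (2 * Real.sqrt (1 - y)) * -1) y :=
      (Real.hasDerivAt_sqrt (ne_of_gt hy3)).comp y hu
    have hprod : HasDerivAt (fun t : ℝ => (1 - t) * Real.sqrt (1 - t))
        (-1 * Real.sqrt (1 - y) + (1 - y) * (1 / (2 * Real.sqrt (1 - y)) * -1)) y :=
      hu.mul hsqu
    have htotal := (hsq1.sub hmul).sub (hprod.const_mul (2 * Real.sqrt 2 / 3))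
    refine htotal.congr_deriv ?_
    have e1 : Real.sqrt (1 - y) * Real.sqrt (1 - y) = 1 - y :=
      Real.mul_self_sqrt hy3.le
    have hsub : (1 - y) * (1 / (2 * Real.sqrt (1 - y)) * -1) = -Real.sqrt (1 - y) / 2 := by
      rw [show (1 - y) * (1 / (2 * Real.sqrt (1 - y)) * -1) = -((Real.sqrt (1 - y) * Real.sqrt (1 - y)) / (2 * Real.sqrt (1 - y))) by rw [e1]; ring]
      field_simp
    rw [hsub]
    field_simp
    ring
  have hcont : ContinuousOn g (Set.Icc 0 1) := by
    apply Continuous.continuousOn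
    refine Continuous.sub (Continuous.sub ?_ ?_) ?_
    · exact (continuous_const.sub (continuous_pow 2)).sqrt
    · exact continuous_id.mul Real.continuous_arccos
    · exact continuous_const.mul
        ((continuous_const.sub continuous_id).mul (continuous_const.sub continuous_id).sqrt)
  have hanti : AntitoneOn g (Set.Icc 0 1) := by
    apply antitoneOn_of_deriv_nonpos (convex_Icc 0 1) hcont
    · intro y hy
      rw [interior_Icc] at hy
      exact ((hD y hy).differentiableAt).differentiableWithinAt
    · intro y hy
      rw [interior_Icc] at hy
      rw [(hD y hy).deriv]
      have := arccos_ge_sqrt (t := y) (by linarith [hy.1]) hy.2.le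
      linarith
  have hg1 : g 1 = 0 := by
    simp [hg, Real.arccos_one]
  have := hanti (Set.mem_Icc.2 ⟨h0, h1⟩) (Set.mem_Icc.2 ⟨zero_le_one, le_refl 1⟩) h1
  rw [hg1] at this
  simp only [hg] at this
  linarith

lemma rpow_three_halves {a : ℝ} (ha : 0 ≤ a) :
    a ^ ((3:ℝ)/2) = a * Real.sqrt a := by
  rcases ha.eq_or_lt with h | h
  · rw [← h, Real.zero_rpow (by norm_num), Real.sqrt_zero, mul_zero]
  · rw [show ((3:ℝ)/2) = 1 + 1/2 by norm_num, Real.rpow_add h, Real.rpow_one,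
      Real.sqrt_eq_rpow]

theorem eta_gt_one (x n : ℝ) (hx : 0 < x) (hn : 0 < n)
    (h : n < x - ((3 * Real.sqrt 2) / 4) ^ ((2 : ℝ) / 3) * x ^ ((1 : ℝ) / 3)) :
    1 < eta x n := by
  set c : ℝ := ((3 * Real.sqrt 2) / 4) ^ ((2 : ℝ) / 3) with hc
  have hs2 : (0:ℝ) < Real.sqrt 2 := Real.sqrt_pos.2 (by norm_num)
  have h22 : Real.sqrt 2 * Real.sqrt 2 = 2 := Real.mul_self_sqrt (by norm_num)
  have hb : (0:ℝ) < 3 * Real.sqrt 2 / 4 := by positivity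
  have hcpos : 0 < c := Real.rpow_pos_of_pos hb _
  have hx13 : (0:ℝ) < x ^ ((1:ℝ)/3) := Real.rpow_pos_of_pos hx _
  have hnx : n < x := by nlinarith
  set t : ℝ := n / x with ht
  have ht0 : 0 < t := div_pos hn hx
  have ht1 : t < 1 := (div_lt_one hx).2 hnx
  have hkey := key_ineq ht0.le ht1.le
  have hsx : 0 < Real.sqrt x := Real.sqrt_pos.2 hx
  -- rewrite eta
  have hxx : x ^ 2 - n ^ 2 = x ^ 2 * (1 - t ^ 2) := by
    rw [ht]; field_simp
  have hsqx : Real.sqrt (x ^ 2 - n ^ 2) = x * Real.sqrt (1 - t ^ 2) := by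
    rw [hxx, Real.sqrt_mul (sq_nonneg x), Real.sqrt_sq hx.le]
  have hnt : n = x * t := by rw [ht]; field_simp
  have heta : eta x n = x * (Real.sqrt (1 - t ^ 2) - t * Real.arccos t) := by
    rw [eta, hsqx, ← ht]
    rw [hnt]
    ring
  set d : ℝ := x - n with hd
  have hdpos : 0 < d := by linarith
  have hdc : c * x ^ ((1:ℝ)/3) < d := by rw [hd]; linarith
  -- x * (1-t) * sqrt(1-t) = d * sqrt d / sqrt x
  have h1t : 1 - t = d / x := by rw [ht, hd]; field_simp
  have hxe : x * (2 * Real.sqrt 2 / 3 * ((1 - t) * Real.sqrt (1 - t)))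
      = 2 * Real.sqrt 2 / 3 * (d * Real.sqrt d / Real.sqrt x) := by
    rw [h1t, show Real.sqrt (d / x) = Real.sqrt d / Real.sqrt x from Real.sqrt_div' d hx.le ▸ rfl]
    · field_simp
  have hlow : 2 * Real.sqrt 2 / 3 * (d * Real.sqrt d / Real.sqrt x) ≤ eta x n := by
    rw [heta, ← hxe]
    exact mul_le_mul_of_nonneg_left hkey hx.le
  -- strict lower bound on d * sqrt d
  have hmono : (c * x ^ ((1:ℝ)/3)) ^ ((3:ℝ)/2) < d ^ ((3:ℝ)/2) :=
    Real.rpow_lt_rpow (by positivity) hdc (by norm_num)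
  have hlhs : (c * x ^ ((1:ℝ)/3)) ^ ((3:ℝ)/2) = 3 * Real.sqrt 2 / 4 * Real.sqrt x := by
    rw [Real.mul_rpow hcpos.le hx13.le, hc, ← Real.rpow_mul hb.le, ← Real.rpow_mul hx.le]
    norm_num
    exact (Real.sqrt_eq_rpow x).symm
  have hdd : d ^ ((3:ℝ)/2) = d * Real.sqrt d := rpow_three_halves hdpos.le
  have hstrict : 3 * Real.sqrt 2 / 4 * Real.sqrt x < d * Real.sqrt d := by
    rw [← hdd, ← hlhs]; exact hmono
  have hfin : 1 < 2 * Real.sqrt 2 / 3 * (d * Real.sqrt d / Real.sqrt x) := by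
    rw [← mul_div_assoc, lt_div_iff₀ hsx]
    nlinarith
  linarith
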